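/- Let n ≥ 3 be an integer and let z be a nonzero complex number. Then Φ_n(z) = z^{φ(n)/2} · ψ_n(z + z⁻¹), where Φ_n is the n-th cyclotomic polynomial evaluated at z, φ is Euler's totient function (φ(n) is even for n ≥ 3), and ψ_n(z + z⁻¹) denotes the evaluation at z + z⁻¹ of the minimal polynomial over ℚ of 2·cos(2π/n), regarded as a polynomial with complex coefficients. -/

import Mathlib

open scoped Real
open Polynomial

noncomputable section

/-- `ψ_n`: the minimal polynomial over ℚ of `2 cos(2π/n)`, regarded as a polynomial in `ℂ[t]`. -/
def psiC (n : ℕ) : ℂ[X] :=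
  (minpoly ℚ (2 * Real.cos (2 * π / n))).map (algebraMap ℚ ℂ)

open IntermediateField in
set_option synthInstance.maxHeartbeats 400000 in
set_option maxHeartbeats 2000000 in
/-- Lehmer's identity: `Φ_n(z) = z^{φ(n)/2} ψ_n(z + z⁻¹)` for `z ≠ 0` and `n ≥ 3`. -/
theorem cyclotomic_eval_eq_pow_mul_psi_eval (n : ℕ) (hn : 3 ≤ n) (z : ℂ) (hz : z ≠ 0) :
    (Polynomial.cyclotomic n ℂ).eval z =
      z ^ (Nat.totient n / 2) * (psiC n).eval (z + z⁻¹) := by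
  simp only [psiC]
  have hn0 : n ≠ 0 := by omega
  have hnpos : 0 < n := by omega
  set ζ0 : ℂ := Complex.exp (2 * π * Complex.I / n) with hζ0def
  have hζ0 : IsPrimitiveRoot ζ0 n := Complex.isPrimitiveRoot_exp n hn0
  set y : ℂ := ζ0 + ζ0⁻¹ with hydef
  -- step 1 : the real 2cos equals y
  have hy : ((2 * Real.cos (2 * π / n) : ℝ) : ℂ) = y := by
    rw [hydef, hζ0def]
    have h : (2 * ↑π * Complex.I / n) = ((2 * π / n : ℝ) : ℂ) * Complex.I := by
      push_cast; ring
    rw [h, ← Complex.exp_neg]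
    push_cast
    rw [Complex.two_cos]
    ring_nf
  -- minpoly identification
  have hm : minpoly ℚ (2 * Real.cos (2 * π / n)) = minpoly ℚ y := by
    rw [← hy]
    exact (minpoly.algHom_eq (Complex.ofRealAm.restrictScalars ℚ)
      (fun a b h => Complex.ofReal_injective h) _).symm
  rw [hm]
  set m : ℚ[X] := minpoly ℚ y with hmdef
  -- integrality
  have hζint : IsIntegral ℚ ζ0 := by
    refine ⟨cyclotomic n ℚ, cyclotomic.monic n ℚ, ?_⟩
    rw [← eval_map, map_cyclotomic]
    exact hζ0.isRoot_cyclotomic hnpos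
  have haeval : ∀ ζ : ℂ, IsPrimitiveRoot ζ n → (Polynomial.aeval ζ) (cyclotomic n ℚ) = 0 := by
    intro ζ hζ
    rw [aeval_def, ← eval_map, map_cyclotomic]
    exact hζ.isRoot_cyclotomic hnpos
  set K : IntermediateField ℚ ℂ := ℚ⟮ζ0⟯ with hKdef
  set g : K := AdjoinSimple.gen ℚ ζ0 with hgdef
  have hvg : (algebraMap K ℂ) g = ζ0 := AdjoinSimple.algebraMap_gen ℚ ζ0
  set u : K := g + g⁻¹ with hudef
  have hvu : (algebraMap K ℂ) u = y := by
    rw [hudef, map_add, map_inv₀, hvg, hydef]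
  have hming : minpoly ℚ g = cyclotomic n ℚ := by
    have := minpoly.algHom_eq K.val K.val.injective g
    rw [show K.val g = ζ0 from hvg] at this
    rw [← cyclotomic_eq_minpoly_rat hζ0 hnpos] at this
    exact this.symm
  have hminu : minpoly ℚ u = m := by
    have := minpoly.algHom_eq K.val K.val.injective u
    rw [show K.val u = y from hvu] at this
    rw [hmdef]; exact this.symm
  -- conjugation: every ζ + ζ⁻¹ for primitive ζ is a root of m
  have hexists : ∀ ζ : ℂ, IsPrimitiveRoot ζ n → ∃ σ : K →ₐ[ℚ] ℂ, σ g = ζ := by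
    intro ζ hζ
    have hpbgen : (adjoin.powerBasis hζint).gen = g := rfl
    have hroot : (Polynomial.aeval ζ) (minpoly ℚ (adjoin.powerBasis hζint).gen) = 0 := by
      rw [hpbgen, hming]; exact haeval ζ hζ
    refine ⟨(adjoin.powerBasis hζint).lift ζ hroot, ?_⟩
    rw [← hpbgen]
    exact (adjoin.powerBasis hζint).lift_gen ζ hroot
  have hconj : ∀ ζ : ℂ, IsPrimitiveRoot ζ n → (Polynomial.aeval (ζ + ζ⁻¹)) m = 0 := by
    intro ζ hζ
    obtain ⟨σ, hσg⟩ := hexists ζ hζ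
    have hσu : σ u = ζ + ζ⁻¹ := by rw [hudef, map_add, map_inv₀, hσg]
    rw [← hσu, ← hminu, aeval_algHom_apply, minpoly.aeval, map_zero]
  -- integrality of y
  have hinv : ζ0⁻¹ = ζ0 ^ (n - 1) := by
    refine inv_eq_of_mul_eq_one_right ?_
    rw [← pow_succ', Nat.sub_add_cancel hnpos]
    exact hζ0.pow_eq_one
  have hyint : IsIntegral ℚ y := by
    rw [hydef, hinv]; exact hζint.add (hζint.pow _)
  -- degrees
  set Fy : IntermediateField ℚ ℂ := ℚ⟮y⟯ with hFydef
  have hyK : y ∈ K := by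
    rw [hydef]
    exact add_mem (mem_adjoin_simple_self ℚ ζ0) (inv_mem (mem_adjoin_simple_self ℚ ζ0))
  have hle : Fy ≤ K := by rw [hFydef, hKdef]; exact adjoin_simple_le_iff.mpr hyK
  have hfinK : Module.finrank ℚ K = n.totient := by
    rw [hKdef, adjoin.finrank hζint, ← cyclotomic_eq_minpoly_rat hζ0 hnpos, natDegree_cyclotomic]
  have hfinFy : Module.finrank ℚ Fy = m.natDegree := by
    rw [hFydef, adjoin.finrank hyint, hmdef]
  -- ζ0 is not real, hence not in Fy
  have hζ0im : ζ0.im ≠ 0 := by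
    have h : (2 * ↑π * Complex.I / n) = ((2 * π / n : ℝ) : ℂ) * Complex.I := by
      push_cast; ring
    rw [hζ0def, h, Complex.exp_ofReal_mul_I_im]
    have hn0' : (0:ℝ) < n := by positivity
    have h1 : 0 < 2 * π / n := by positivity
    have h3 : (3:ℝ) ≤ n := by exact_mod_cast hn
    have h2 : 2 * π / n < π := by
      rw [div_lt_iff₀ hn0']
      nlinarith [Real.pi_pos, mul_le_mul_of_nonneg_left h3 (le_of_lt Real.pi_pos)]
    exact ne_of_gt (Real.sin_pos_of_pos_of_lt_pi h1 h2)
  have hζ0notFy : ζ0 ∉ Fy := by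
    intro hmem
    set RR : IntermediateField ℚ ℂ :=
      Subalgebra.toIntermediateField (Complex.ofRealAm.restrictScalars ℚ).range
        (fun x hx => by
          obtain ⟨r, hr⟩ := hx
          exact ⟨r⁻¹, by rw [← hr]; simp⟩) with hRRdef
    have hFyRR : Fy ≤ RR := by
      rw [hFydef]
      refine adjoin_le_iff.mpr ?_
      intro w hw
      rw [Set.mem_singleton_iff] at hw
      subst hw
      exact ⟨2 * Real.cos (2 * π / n), hy⟩
    obtain ⟨r, hr⟩ := hFyRR hmem
    apply hζ0im
    rw [← hr]
    simp
  -- work inside K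
  haveI : FiniteDimensional ℚ K := by
    rw [hKdef]
    exact IntermediateField.adjoin.finiteDimensional hζint
  have hgne : g ≠ 0 := by
    intro h0
    apply hζ0.ne_zero hn0
    rw [← hvg, h0, map_zero]
  set FF : IntermediateField ℚ K := ℚ⟮u⟯ with hFFdef
  have huFF : u ∈ FF := mem_adjoin_simple_self ℚ u
  have hgnotFF : g ∉ FF := by
    intro hmem
    apply hζ0notFy
    have hmap : FF.map K.val = Fy := by
      have hvu' : K.val u = y := hvu
      rw [hFFdef, hFydef]
      erw [IntermediateField.adjoin_map, Set.image_singleton, hvu']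
    rw [← hmap]
    exact ⟨g, hmem, hvg⟩
  have hgintFF : IsIntegral ↥FF g := IsIntegral.tower_top (A := ↥FF) (IsIntegral.of_finite ℚ g)
  have hgen : (adjoin.powerBasis hζint).gen = g := rfl
  have hprim : adjoin ℚ ({g} : Set K) = ⊤ := by
    rw [← hgen]
    exact adjoin_eq_top_of_algebra (hS := (adjoin.powerBasis hζint).adjoin_gen_eq_top)
  have hfinFFK : Module.finrank ↥FF ↥K = (minpoly ↥FF g).natDegree := by
    have h := adjoin.finrank hgintFF
    erw [adjoin_eq_top_of_adjoin_eq_top ℚ hprim, finrank_top ↥FF ↥K] at h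
    exact h
  have hdeg2 : (minpoly ↥FF g).natDegree = 2 := by
    have hu' : (algebraMap ↥FF ↥K) (⟨u, huFF⟩ : FF) = u := rfl
    have hPeval : (Polynomial.aeval g) (X ^ 2 - C (⟨u, huFF⟩ : FF) * X + 1) = 0 := by
      simp only [map_add, map_sub, map_mul, map_pow, map_one, aeval_X, aeval_C, hu']
      rw [hudef]
      have hg1 : g * g⁻¹ = 1 := mul_inv_cancel₀ hgne
      calc g ^ 2 - (g + g⁻¹) * g + 1 = -(g * g⁻¹) + 1 := by ring
        _ = 0 := by rw [hg1]; ring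
    have hP2 : (X ^ 2 - C (⟨u, huFF⟩ : FF) * X + 1 : Polynomial ↥FF).natDegree = 2 := by
      compute_degree!
    have hup : (minpoly ↥FF g).natDegree ≤ 2 := by
      have hdvd := minpoly.dvd ↥FF g hPeval
      calc (minpoly ↥FF g).natDegree
          ≤ (X ^ 2 - C (⟨u, huFF⟩ : FF) * X + 1 : Polynomial ↥FF).natDegree :=
            Polynomial.natDegree_le_of_dvd hdvd (by intro h0; rw [h0] at hP2; simp at hP2)
        _ = 2 := hP2
    have hlo : 2 ≤ (minpoly ↥FF g).natDegree := by
      rw [minpoly.two_le_natDegree_iff hgintFF]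
      rintro ⟨w, hw⟩
      exact hgnotFF (hw ▸ w.2)
    omega
  have htot : n.totient = m.natDegree * 2 := by
    have hfr : Module.finrank ℚ ↥FF * Module.finrank ↥FF ↥K = Module.finrank ℚ ↥K :=
      Module.finrank_mul_finrank ℚ ↥FF ↥K
    have h1 : Module.finrank ℚ ↥FF = m.natDegree := by
      rw [hFFdef, adjoin.finrank (IsIntegral.of_finite ℚ u), hminu]
    rw [← hfinK, ← hfr, h1, hfinFFK, hdeg2]
  -- roots of m over ℂ
  set S : Finset ℂ := (primitiveRoots n ℂ).image (fun x => x + x⁻¹) with hSdef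
  set M : ℂ[X] := m.map (algebraMap ℚ ℂ) with hMdef
  have hmmonic : m.Monic := minpoly.monic hyint
  have hMmonic : M.Monic := hmmonic.map _
  have hMne : M ≠ 0 := hMmonic.ne_zero
  have hMdeg : M.natDegree = m.natDegree := by
    rw [hMdef]
    exact natDegree_map_eq_of_injective (algebraMap ℚ ℂ).injective m
  have hsep : m.Separable := (minpoly.irreducible hyint).separable
  have hMsep : M.Separable := hsep.map
  have hnodup : M.roots.Nodup := Polynomial.nodup_roots hMsep
  have hMsplits : M.Splits := IsAlgClosed.splits M
  have hcard : M.roots.card = m.natDegree := by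
    rw [← hMdeg]
    exact (Polynomial.splits_iff_card_roots).mp hMsplits
  have hmemprim : ∀ x ∈ primitiveRoots n ℂ, IsPrimitiveRoot x n :=
    fun x hx => (mem_primitiveRoots hnpos).mp hx
  have hSsub : S ⊆ M.roots.toFinset := by
    intro β hβ
    obtain ⟨ζ, hζmem, hζβ⟩ := Finset.mem_image.mp hβ
    rw [Multiset.mem_toFinset, mem_roots hMne]
    have : (Polynomial.aeval β) m = 0 := by
      rw [← hζβ]; exact hconj ζ (hmemprim ζ hζmem)
    rwa [IsRoot.def, hMdef, eval_map, ← aeval_def]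
  -- fibers
  have hpair : ∀ w ζ : ℂ, w ≠ 0 → ζ ≠ 0 → w + w⁻¹ = ζ + ζ⁻¹ → w = ζ ∨ w = ζ⁻¹ := by
    intro w ζ hw hζ h
    have hw1 : w * w⁻¹ = 1 := mul_inv_cancel₀ hw
    have hζ1 : ζ * ζ⁻¹ = 1 := mul_inv_cancel₀ hζ
    have h2 : (w - ζ) * (w - ζ⁻¹) = 0 := by
      calc (w - ζ) * (w - ζ⁻¹) = w * w - w * (ζ + ζ⁻¹) + ζ * ζ⁻¹ := by ring
        _ = w * w - w * (w + w⁻¹) + ζ * ζ⁻¹ := by rw [h]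
        _ = -(w * w⁻¹) + ζ * ζ⁻¹ := by ring
        _ = 0 := by rw [hw1, hζ1]; ring
    rcases mul_eq_zero.mp h2 with h3 | h3
    · exact Or.inl (sub_eq_zero.mp h3)
    · exact Or.inr (sub_eq_zero.mp h3)
  have hfib : ∀ ζ : ℂ, ζ ∈ primitiveRoots n ℂ →
      (primitiveRoots n ℂ).filter (fun x => x + x⁻¹ = ζ + ζ⁻¹) = {ζ, ζ⁻¹} := by
    intro ζ hζmem
    have hζ := hmemprim ζ hζmem
    ext x
    simp only [Finset.mem_filter, Finset.mem_insert, Finset.mem_singleton]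
    constructor
    · rintro ⟨hxmem, hx⟩
      exact hpair x ζ ((hmemprim x hxmem).ne_zero hn0) (hζ.ne_zero hn0) hx
    · rintro (rfl | rfl)
      · exact ⟨hζmem, rfl⟩
      · refine ⟨(mem_primitiveRoots hnpos).mpr hζ.inv, ?_⟩
        rw [inv_inv]
        ring
  have hne : ∀ ζ : ℂ, IsPrimitiveRoot ζ n → ζ ≠ ζ⁻¹ := by
    intro ζ hζ heq
    have h2 : ζ ^ 2 = 1 := by
      rw [pow_two]
      nth_rewrite 2 [heq]
      exact mul_inv_cancel₀ (hζ.ne_zero hn0)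
    have h3 := Nat.le_of_dvd (by norm_num) (hζ.dvd_of_pow_eq_one 2 h2)
    omega
  have hmapsto : ∀ x ∈ primitiveRoots n ℂ, x + x⁻¹ ∈ S := by
    intro x hx
    exact Finset.mem_image_of_mem _ hx
  have hcardS : 2 * S.card = n.totient := by
    have h1 := Finset.card_eq_sum_card_fiberwise hmapsto
    rw [hζ0.card_primitiveRoots] at h1
    rw [h1, Finset.sum_congr rfl (fun β hβ => ?_), Finset.sum_const, smul_eq_mul, mul_comm]
    obtain ⟨ζ, hζmem, hζβ⟩ := Finset.mem_image.mp hβ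
    rw [← hζβ, hfib ζ hζmem, Finset.card_insert_of_notMem (by
      simpa using hne ζ (hmemprim ζ hζmem)), Finset.card_singleton]
  have hScard : S.card = m.natDegree := by omega
  have hSeq : S = M.roots.toFinset := by
    refine Finset.eq_of_subset_of_card_le hSsub ?_
    rw [Multiset.toFinset_card_of_nodup hnodup, hcard, hScard]
  have hrootsval : M.roots = S.val := by
    rw [hSeq]
    exact (Multiset.dedup_eq_self.mpr hnodup).symm
  -- evaluate
  have hMeval : M.eval (z + z⁻¹) = ∏ β ∈ S, (z + z⁻¹ - β) := by
    conv_lhs => rw [hMsplits.eq_prod_roots_of_monic hMmonic]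
    rw [hrootsval, eval_multiset_prod]
    rw [Finset.prod_eq_multiset_prod]
    rw [Multiset.map_map]
    congr 1
    apply Multiset.map_congr rfl
    intro x hx
    simp
  have hcyc : (cyclotomic n ℂ).eval z = ∏ β ∈ S, (z * (z + z⁻¹ - β)) := by
    rw [cyclotomic_eq_prod_X_sub_primitiveRoots hζ0, eval_prod]
    simp only [eval_sub, eval_X, eval_C]
    rw [← Finset.prod_fiberwise_of_maps_to (t := S) (g := fun x => x + x⁻¹) hmapsto (fun x => z - x)]
    refine Finset.prod_congr rfl ?_
    intro β hβ
    obtain ⟨ζ, hζmem, hζβ⟩ := Finset.mem_image.mp hβ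
    have hζ := hmemprim ζ hζmem
    have hfe : (primitiveRoots n ℂ).filter (fun x => x + x⁻¹ = β) = {ζ, ζ⁻¹} := by
      rw [← hζβ]; exact hfib ζ hζmem
    rw [hfe, Finset.prod_insert (by simpa using hne ζ hζ), Finset.prod_singleton]
    have hz1 : z * z⁻¹ = 1 := mul_inv_cancel₀ hz
    have hζ1 : ζ * ζ⁻¹ = 1 := mul_inv_cancel₀ (hζ.ne_zero hn0)
    calc (z - ζ) * (z - ζ⁻¹) = z * z - z * (ζ + ζ⁻¹) + ζ * ζ⁻¹ := by ring
      _ = z * z - z * (ζ + ζ⁻¹) + z * z⁻¹ := by rw [hζ1, hz1]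
      _ = z * (z + z⁻¹ - (ζ + ζ⁻¹)) := by ring
      _ = z * (z + z⁻¹ - β) := by rw [hζβ]
  rw [hcyc, Finset.prod_mul_distrib, Finset.prod_const, hScard, hMeval]
  congr 2
  omega

end
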